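/- Let A be a finite pseudocomplemented distributive lattice, and let J denote the order dual of the subposet of join-irreducible elements of A. Then J has a free skeleton if and only if A is nontrivial (0 ≠ 1) and the following two conditions hold: (a) there exists a family of join-irreducible elements c_{a,Y}, indexed by the pairs (a, Y) where a is join-irreducible and Y is a nonempty set of atoms of A below a, such that c_{a,Y} ≤ a, the set of atoms of A below c_{a,Y} equals Y, and for nonempty sets of atoms Y ⊆ Z below a one has c_{a,Y} ≤ c_{a,Z}; (b) ¬¬b is join-irreducible for every b ∈ A with b ≠ 0. -/

import Mathlib

/-- The set of maximal elements of the subposet `S`. -/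
def maxSet {X : Type*} [PartialOrder X] (S : Set X) : Set X :=
  {x | x ∈ S ∧ ∀ y ∈ S, x ≤ y → y = x}

/-- A weak p-morphism: an order preserving map such that for all `x` and all maximal `y`
above `p x` there is a maximal element `z` of `↑x` with `p z = y`. -/
def IsWeakPMorphism {X Y : Type*} [PartialOrder X] [PartialOrder Y] (p : X → Y) : Prop :=
  Monotone p ∧
    ∀ x : X, ∀ y ∈ maxSet (Set.univ : Set Y), p x ≤ y →
      ∃ z ∈ maxSet (Set.Ici x), p z = y

/-- `s` is a witnessing family for a free skeleton on a poset with least element `bot`: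
`s x Y` is the element `s_{x,Y}` (its value is only constrained when `Y` is a nonempty
subset of `max ↑x`). -/
def IsFreeSkeleton {X : Type*} [PartialOrder X] (bot : X) (s : X → Set X → X) : Prop :=
  (∀ (x : X) (Y : Set X), Y.Nonempty → Y ⊆ maxSet (Set.Ici x) →
      x ≤ s x Y ∧ Y = maxSet (Set.Ici (s x Y))) ∧
  (∀ (x : X) (Y Z : Set X), Y.Nonempty → Z.Nonempty →
      Y ⊆ maxSet (Set.Ici x) → Z ⊆ maxSet (Set.Ici x) → Y ⊆ Z → s x Z ≤ s x Y) ∧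
  (∀ (x : X) (Y : Set X), Y.Nonempty → Y ⊆ maxSet (Set.univ : Set X) →
      maxSet (Set.Ici x) ⊆ Y → s bot Y ≤ x)

/-- A poset has a free skeleton when it has a least element together with a witnessing
family `s_{x,Y}` as in `IsFreeSkeleton`. -/
def HasFreeSkeleton (X : Type*) [PartialOrder X] : Prop :=
  ∃ (bot : X) (s : X → Set X → X), IsBot bot ∧ IsFreeSkeleton bot s

/-- An element of a lattice with a least element is join-irreducible if it is nonzero and
`a = b ⊔ c` implies `a = b` or `a = c`. -/
def JoinIrr {A : Type*} [Lattice A] [OrderBot A] (a : A) : Prop :=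
  a ≠ ⊥ ∧ ∀ b c : A, a = b ⊔ c → a = b ∨ a = c

section Aux
variable {A : Type*} [DistribLattice A] [BoundedOrder A] [Fintype A]

lemma atom_joinIrr {p : A} (hp : IsAtom p) : JoinIrr p := by
  refine ⟨hp.1, fun b c h => ?_⟩
  rcases hp.le_iff.1 (le_sup_left.trans h.ge) with hb | hb
  · subst hb; exact Or.inr (by simpa using h)
  · exact Or.inl hb.symm

lemma exists_atom_le {a : A} (h : a ≠ ⊥) : ∃ p, IsAtom p ∧ p ≤ a :=
  ((IsAtomic.eq_bot_or_exists_atom_le a).resolve_left h)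

/-- every element is below the join of the join-irreducibles below it -/
lemma le_of_forall_joinIrr_le (a u : A) (h : ∀ p, JoinIrr p → p ≤ a → p ≤ u) : a ≤ u := by
  induction a using WellFoundedLT.induction with
  | _ a IH =>
    by_cases ha : a = ⊥
    · simp [ha]
    by_cases hj : JoinIrr a
    · exact h a hj le_rfl
    · have hj' : ∃ b c, a = b ⊔ c ∧ a ≠ b ∧ a ≠ c := by
        by_contra hcon
        push_neg at hcon
        exact hj ⟨ha, fun b c hbc => by
          by_cases hb : a = b
          · exact Or.inl hb
          · exact Or.inr (hcon b c hbc hb)⟩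
      obtain ⟨b, c, habc, hb, hc⟩ := hj'
      have hba : b < a := lt_of_le_of_ne (le_sup_left.trans habc.ge) (Ne.symm hb)
      have hca : c < a := lt_of_le_of_ne (le_sup_right.trans habc.ge) (Ne.symm hc)
      have hbu := IH b hba (fun p hp hpb => h p hp (hpb.trans hba.le))
      have hcu := IH c hca (fun p hp hpc => h p hp (hpc.trans hca.le))
      exact habc.le.trans (sup_le hbu hcu)

lemma atom_inf_eq_bot_iff {p b : A} (hp : IsAtom p) : p ⊓ b = ⊥ ↔ ¬ p ≤ b := by
  constructor
  · intro h hle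
    rw [inf_eq_left.2 hle] at h; exact hp.1 h
  · intro h
    rcases hp.le_iff.1 (inf_le_left : p ⊓ b ≤ p) with h' | h'
    · exact h'
    · exact absurd (h' ▸ inf_le_right) h

lemma atom_supPrime {p a b : A} (hp : IsAtom p) (h : p ≤ a ⊔ b) : p ≤ a ∨ p ≤ b := by
  by_contra hcon
  push_neg at hcon
  have h1 := (atom_inf_eq_bot_iff hp).2 hcon.1
  have h2 := (atom_inf_eq_bot_iff hp).2 hcon.2
  have : p = (p ⊓ a) ⊔ (p ⊓ b) := by rw [← inf_sup_left, inf_eq_left.2 h]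
  rw [h1, h2, sup_idem] at this
  exact hp.1 this

end Aux

section Neg
variable {A : Type*} [DistribLattice A] [BoundedOrder A] [Fintype A]
variable {neg : A → A} (hneg : ∀ a b : A, a ≤ neg b ↔ a ⊓ b = ⊥)
include hneg

lemma atom_le_neg_iff {p b : A} (hp : IsAtom p) : p ≤ neg b ↔ ¬ p ≤ b := by
  rw [hneg, atom_inf_eq_bot_iff hp]

lemma le_negneg_iff {b u : A} : u ≤ neg (neg b) ↔ ∀ p, IsAtom p → p ≤ u → p ≤ b := by
  rw [hneg]
  constructor
  · intro h p hp hpu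
    by_contra hpb
    have h1 : p ≤ neg b := (atom_le_neg_iff hneg hp).2 hpb
    have h2 : p ≤ u ⊓ neg b := le_inf hpu h1
    rw [h] at h2; exact hp.1 (le_bot_iff.1 h2)
  · intro h
    by_contra hne
    obtain ⟨p, hp, hple⟩ := exists_atom_le hne
    exact (atom_le_neg_iff hneg hp).1 (hple.trans inf_le_right) (h p hp (hple.trans inf_le_left))

end Neg

section MaxSet
variable {A : Type*} [DistribLattice A] [BoundedOrder A] [Fintype A]

lemma jle_iff (x y : {a : A // JoinIrr a}ᵒᵈ) :
    x ≤ y ↔ (OrderDual.ofDual y).1 ≤ (OrderDual.ofDual x).1 := Iff.rfl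

lemma jeq_iff (x y : {a : A // JoinIrr a}ᵒᵈ) :
    x = y ↔ (OrderDual.ofDual x).1 = (OrderDual.ofDual y).1 := by
  constructor
  · rintro rfl; rfl
  · intro h
    exact OrderDual.ofDual_inj.1 (Subtype.ext h)

lemma mem_maxSet_Ici_iff (x z : {a : A // JoinIrr a}ᵒᵈ) :
    z ∈ maxSet (Set.Ici x) ↔
      IsAtom (OrderDual.ofDual z).1 ∧ (OrderDual.ofDual z).1 ≤ (OrderDual.ofDual x).1 := by
  constructor
  · rintro ⟨hz1, hz2⟩
    have hzx : (OrderDual.ofDual z).1 ≤ (OrderDual.ofDual x).1 := hz1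
    refine ⟨⟨(OrderDual.ofDual z).2.1, fun b hb => ?_⟩, hzx⟩
    by_contra hbb
    obtain ⟨q, hq, hqb⟩ := exists_atom_le hbb
    set y : {a : A // JoinIrr a}ᵒᵈ := OrderDual.toDual ⟨q, atom_joinIrr hq⟩ with hy
    have h1 : y ∈ Set.Ici x := (jle_iff x y).2 ((hqb.trans hb.le).trans hzx)
    have h2 : z ≤ y := (jle_iff z y).2 (hqb.trans hb.le)
    have := (jeq_iff y z).1 (hz2 y h1 h2)
    simp only [hy, OrderDual.ofDual_toDual] at this
    exact absurd (this ▸ (hqb.trans_lt hb)) (lt_irrefl _)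
  · rintro ⟨hatom, hle⟩
    refine ⟨hle, fun y hy hzy => ?_⟩
    have h1 : (OrderDual.ofDual y).1 ≤ (OrderDual.ofDual z).1 := hzy
    rcases hatom.le_iff.1 h1 with h | h
    · exact absurd h (OrderDual.ofDual y).2.1
    · exact (jeq_iff y z).2 h

lemma mem_maxSet_univ_iff (z : {a : A // JoinIrr a}ᵒᵈ) :
    z ∈ maxSet (Set.univ : Set {a : A // JoinIrr a}ᵒᵈ) ↔ IsAtom (OrderDual.ofDual z).1 := by
  constructor
  · rintro ⟨-, hz2⟩
    refine ⟨(OrderDual.ofDual z).2.1, fun b hb => ?_⟩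
    by_contra hbb
    obtain ⟨q, hq, hqb⟩ := exists_atom_le hbb
    set y : {a : A // JoinIrr a}ᵒᵈ := OrderDual.toDual ⟨q, atom_joinIrr hq⟩ with hy
    have h2 : z ≤ y := (jle_iff z y).2 (hqb.trans hb.le)
    have := (jeq_iff y z).1 (hz2 y trivial h2)
    simp only [hy, OrderDual.ofDual_toDual] at this
    exact absurd (this ▸ (hqb.trans_lt hb)) (lt_irrefl _)
  · intro hatom
    refine ⟨trivial, fun y _ hzy => ?_⟩
    have h1 : (OrderDual.ofDual y).1 ≤ (OrderDual.ofDual z).1 := hzy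
    rcases hatom.le_iff.1 h1 with h | h
    · exact absurd h (OrderDual.ofDual y).2.1
    · exact (jeq_iff y z).2 h

end MaxSet

section Ssup
variable {A : Type*} [DistribLattice A] [BoundedOrder A] [Fintype A]

open Classical in
noncomputable def ssup (Y : Set A) : A := Finset.univ.sup (fun b => if b ∈ Y then b else ⊥)

lemma le_ssup {Y : Set A} {p : A} (hp : p ∈ Y) : p ≤ ssup Y := by
  classical
  have := Finset.le_sup (f := fun b => if b ∈ Y then b else ⊥) (Finset.mem_univ p)
  simpa [hp, ssup] using this

lemma atom_le_ssup_iff {Y : Set A} (hY : ∀ b ∈ Y, IsAtom b) {p : A} (hp : IsAtom p) :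
    p ≤ ssup Y ↔ p ∈ Y := by
  classical
  constructor
  · intro h
    have := Finset.sup_induction (s := Finset.univ) (f := fun b => if b ∈ Y then b else ⊥)
      (p := fun z => p ≤ z → p ∈ Y)
      (by intro hle; exact absurd (le_bot_iff.1 hle) hp.1)
      (by
        intro a1 h1 a2 h2 hle
        rcases atom_supPrime hp hle with h | h
        · exact h1 h
        · exact h2 h)
      (by
        intro b _
        intro hle
        by_cases hb : b ∈ Y
        · simp only [hb, if_pos] at hle
          rcases (hY b hb).le_iff.1 hle with h | h
          · exact absurd h hp.1
          · exact h ▸ hb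
        · simp only [hb, if_neg, not_false_iff] at hle
          exact absurd (le_bot_iff.1 hle) hp.1)
    exact this h
  · exact le_ssup

lemma ssup_ne_bot {Y : Set A} (hne : Y.Nonempty) (hY : ∀ b ∈ Y, IsAtom b) : ssup Y ≠ ⊥ := by
  obtain ⟨p, hp⟩ := hne
  intro h
  exact (hY p hp).1 (le_bot_iff.1 (h ▸ le_ssup hp))

end Ssup

section Neg2
variable {A : Type*} [DistribLattice A] [BoundedOrder A] [Fintype A]
variable {neg : A → A} (hneg : ∀ a b : A, a ≤ neg b ↔ a ⊓ b = ⊥)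
include hneg

lemma atom_le_negneg_iff {p b : A} (hp : IsAtom p) : p ≤ neg (neg b) ↔ p ≤ b := by
  rw [le_negneg_iff hneg]
  constructor
  · intro h; exact h p hp le_rfl
  · intro h q hq hqp
    rcases hp.le_iff.1 hqp with h' | h'
    · exact absurd h' hq.1
    · exact h' ▸ h

end Neg2

section Main
variable {A : Type*} [DistribLattice A] [BoundedOrder A] [Fintype A]

/-- value in `A` of an element of the dual of the join-irreducibles -/
def jval (z : {a : A // JoinIrr a}ᵒᵈ) : A := (OrderDual.ofDual z).1

lemma jval_inj : Function.Injective (jval (A := A)) := by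
  intro x y h
  exact (jeq_iff x y).2 h

open Classical in
noncomputable def skelTarget (neg : A → A) (c : A → Set A → A)
    (x : {a : A // JoinIrr a}ᵒᵈ) (Y : Set {a : A // JoinIrr a}ᵒᵈ) : A :=
  if jval x = ⊤ then neg (neg (ssup (jval '' Y))) else c (jval x) (jval '' Y)

open Classical in
noncomputable def skel (neg : A → A) (c : A → Set A → A)
    (x : {a : A // JoinIrr a}ᵒᵈ) (Y : Set {a : A // JoinIrr a}ᵒᵈ) :
    {a : A // JoinIrr a}ᵒᵈ :=
  if h : JoinIrr (skelTarget neg c x Y) then OrderDual.toDual ⟨skelTarget neg c x Y, h⟩ else x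

end Main

section Main2
variable {A : Type*} [DistribLattice A] [BoundedOrder A] [Fintype A]

lemma jle_iff' (x y : {a : A // JoinIrr a}ᵒᵈ) : x ≤ y ↔ jval y ≤ jval x := Iff.rfl

lemma mem_maxSet_Ici_iff' (x z : {a : A // JoinIrr a}ᵒᵈ) :
    z ∈ maxSet (Set.Ici x) ↔ IsAtom (jval z) ∧ jval z ≤ jval x := mem_maxSet_Ici_iff x z

lemma mem_maxSet_univ_iff' (z : {a : A // JoinIrr a}ᵒᵈ) :
    z ∈ maxSet (Set.univ : Set {a : A // JoinIrr a}ᵒᵈ) ↔ IsAtom (jval z) :=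
  mem_maxSet_univ_iff z

lemma backward {neg : A → A} (hneg : ∀ a b : A, a ≤ neg b ↔ a ⊓ b = ⊥)
    (hbt : (⊥ : A) ≠ ⊤)
    (c : A → Set A → A)
    (hc1 : ∀ (a : A) (Y : Set A), JoinIrr a → Y.Nonempty → Y ⊆ {b : A | IsAtom b ∧ b ≤ a} →
        JoinIrr (c a Y) ∧ c a Y ≤ a ∧ {b : A | IsAtom b ∧ b ≤ c a Y} = Y)
    (hc2 : ∀ (a : A) (Y Z : Set A), JoinIrr a → Y.Nonempty → Z.Nonempty →
        Y ⊆ {b : A | IsAtom b ∧ b ≤ a} → Z ⊆ {b : A | IsAtom b ∧ b ≤ a} → Y ⊆ Z →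
        c a Y ≤ c a Z)
    (hb : ∀ b : A, b ≠ ⊥ → JoinIrr (neg (neg b))) :
    ∃ (bot : {a : A // JoinIrr a}ᵒᵈ) (s : _ → _ → {a : A // JoinIrr a}ᵒᵈ),
      IsBot bot ∧ IsFreeSkeleton bot s := by
  have hnegtop : neg (⊤ : A) = ⊥ := by
    have := (hneg (neg ⊤) ⊤).1 le_rfl
    simpa using this
  have hnegbot : neg (⊥ : A) = ⊤ := top_le_iff.1 ((hneg ⊤ ⊥).2 (by simp))
  have hTop : JoinIrr (⊤ : A) := by
    have := hb ⊤ (Ne.symm hbt)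
    rwa [hnegtop, hnegbot] at this
  set bot : {a : A // JoinIrr a}ᵒᵈ := OrderDual.toDual ⟨⊤, hTop⟩ with hbotdef
  have hjbot : jval bot = ⊤ := rfl
  have key : ∀ (x : {a : A // JoinIrr a}ᵒᵈ) (Y : Set {a : A // JoinIrr a}ᵒᵈ),
      Y.Nonempty → Y ⊆ maxSet (Set.Ici x) →
      JoinIrr (skelTarget neg c x Y) ∧ skelTarget neg c x Y ≤ jval x ∧
        {p : A | IsAtom p ∧ p ≤ skelTarget neg c x Y} = jval '' Y := by
    intro x Y hne hsub
    have hYvne : (jval '' Y).Nonempty := hne.image _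
    have hYvsub : jval '' Y ⊆ {b : A | IsAtom b ∧ b ≤ jval x} := by
      rintro b ⟨z, hz, rfl⟩
      exact (mem_maxSet_Ici_iff' x z).1 (hsub hz)
    by_cases hx : jval x = ⊤
    · have hssub : ∀ b ∈ jval '' Y, IsAtom b := fun b hbm => (hYvsub hbm).1
      have hsne : ssup (jval '' Y) ≠ ⊥ := ssup_ne_bot hYvne hssub
      have hji := hb _ hsne
      refine ⟨by rwa [skelTarget, if_pos hx],
        by rw [skelTarget, if_pos hx, hx]; exact le_top, ?_⟩
      rw [skelTarget, if_pos hx]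
      ext p
      simp only [Set.mem_setOf_eq]
      constructor
      · rintro ⟨hp, hple⟩
        exact (atom_le_ssup_iff hssub hp).1 ((atom_le_negneg_iff hneg hp).1 hple)
      · intro hpm
        exact ⟨hssub p hpm, (atom_le_negneg_iff hneg (hssub p hpm)).2 (le_ssup hpm)⟩
    · have := hc1 (jval x) (jval '' Y) (OrderDual.ofDual x).2 hYvne hYvsub
      rw [skelTarget, if_neg hx]
      exact this
  refine ⟨bot, skel neg c, fun z => (jle_iff' bot z).2 (hjbot ▸ le_top), ?_, ?_, ?_⟩
  · -- condition (i)
    intro x Y hne hsub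
    obtain ⟨hji, hle, hatoms⟩ := key x Y hne hsub
    rw [skel, dif_pos hji]
    constructor
    · exact (jle_iff' x _).2 hle
    · ext z
      rw [mem_maxSet_Ici_iff']
      simp only [jval, OrderDual.ofDual_toDual]
      constructor
      · intro hz
        have : jval z ∈ {p : A | IsAtom p ∧ p ≤ skelTarget neg c x Y} :=
          hatoms ▸ ⟨z, hz, rfl⟩
        exact this
      · intro hz
        have hmem : jval z ∈ jval '' Y := by
          rw [← hatoms]; exact hz
        obtain ⟨w, hw, hwz⟩ := hmem
        exact (jval_inj hwz) ▸ hw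
  · -- condition (ii)
    intro x Y Z hYne hZne hYsub hZsub hYZ
    obtain ⟨hjiY, -, -⟩ := key x Y hYne hYsub
    obtain ⟨hjiZ, -, -⟩ := key x Z hZne hZsub
    simp only [skel]
    rw [dif_pos hjiZ, dif_pos hjiY]
    refine (jle_iff' _ _).2 ?_
    show skelTarget neg c x Y ≤ skelTarget neg c x Z
    have hYatoms : ∀ b ∈ jval '' Y, IsAtom b := by
      rintro b ⟨z, hz, rfl⟩
      exact ((mem_maxSet_Ici_iff' x z).1 (hYsub hz)).1
    have hZatoms : ∀ b ∈ jval '' Z, IsAtom b := by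
      rintro b ⟨z, hz, rfl⟩
      exact ((mem_maxSet_Ici_iff' x z).1 (hZsub hz)).1
    by_cases hx : jval x = ⊤
    · simp only [skelTarget, if_pos hx]
      refine (le_negneg_iff hneg).2 ?_
      intro p hp hple
      have h1 : p ≤ ssup (jval '' Y) := (atom_le_negneg_iff hneg hp).1 hple
      have h2 : p ∈ jval '' Y := (atom_le_ssup_iff hYatoms hp).1 h1
      exact le_ssup (Set.image_mono hYZ h2)
    · simp only [skelTarget, if_neg hx]
      exact hc2 (jval x) _ _ (OrderDual.ofDual x).2 ((hYne.image _)) ((hZne.image _))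
        (by rintro b ⟨z, hz, rfl⟩; exact (mem_maxSet_Ici_iff' x z).1 (hYsub hz))
        (by rintro b ⟨z, hz, rfl⟩; exact (mem_maxSet_Ici_iff' x z).1 (hZsub hz))
        (Set.image_mono hYZ)
  · -- condition (iii)
    intro x Y hne hsubuniv hsubIci
    have hsubIcibot : Y ⊆ maxSet (Set.Ici bot) := fun z hz =>
      (mem_maxSet_Ici_iff' bot z).2 ⟨(mem_maxSet_univ_iff' z).1 (hsubuniv hz), hjbot ▸ le_top⟩
    obtain ⟨hji, -, -⟩ := key bot Y hne hsubIcibot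
    rw [skel, dif_pos hji]
    refine (jle_iff' _ x).2 ?_
    show jval x ≤ skelTarget neg c bot Y
    rw [skelTarget, if_pos hjbot]
    refine (le_negneg_iff hneg).2 ?_
    intro p hp hple
    have hmem : (OrderDual.toDual ⟨p, atom_joinIrr hp⟩ : {a : A // JoinIrr a}ᵒᵈ) ∈
        maxSet (Set.Ici x) := (mem_maxSet_Ici_iff' x _).2 ⟨hp, hple⟩
    exact le_ssup ⟨_, hsubIci hmem, rfl⟩

end Main2

section Main3
variable {A : Type*} [DistribLattice A] [BoundedOrder A] [Fintype A]

lemma forward {neg : A → A} (hneg : ∀ a b : A, a ≤ neg b ↔ a ⊓ b = ⊥)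
    (bot : {a : A // JoinIrr a}ᵒᵈ) (s : _ → _ → {a : A // JoinIrr a}ᵒᵈ)
    (hbot : IsBot bot) (hsk : IsFreeSkeleton bot s) :
    ((⊥ : A) ≠ ⊤ ∧
      (∃ c : A → Set A → A,
        (∀ (a : A) (Y : Set A), JoinIrr a → Y.Nonempty →
            Y ⊆ {b : A | IsAtom b ∧ b ≤ a} →
            JoinIrr (c a Y) ∧ c a Y ≤ a ∧ {b : A | IsAtom b ∧ b ≤ c a Y} = Y) ∧
        (∀ (a : A) (Y Z : Set A), JoinIrr a → Y.Nonempty → Z.Nonempty →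
            Y ⊆ {b : A | IsAtom b ∧ b ≤ a} → Z ⊆ {b : A | IsAtom b ∧ b ≤ a} →
            Y ⊆ Z → c a Y ≤ c a Z)) ∧
      (∀ b : A, b ≠ ⊥ → JoinIrr (neg (neg b)))) := by
  classical
  obtain ⟨hs1, hs2, hs3⟩ := hsk
  have hbotval : jval bot = ⊤ :=
    le_antisymm le_top (le_of_forall_joinIrr_le ⊤ (jval bot)
      (fun p hp _ => (jle_iff' bot (OrderDual.toDual ⟨p, hp⟩)).1 (hbot _)))
  have hne : (⊥ : A) ≠ ⊤ := fun h => (OrderDual.ofDual bot).2.1 (hbotval.trans h.symm)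
  -- facts about lifted sets
  have liftne : ∀ (Y : Set A), Y.Nonempty → (∀ b ∈ Y, IsAtom b) →
      ({z : {a : A // JoinIrr a}ᵒᵈ | jval z ∈ Y}).Nonempty := by
    rintro Y ⟨b, hb⟩ hY
    exact ⟨OrderDual.toDual ⟨b, atom_joinIrr (hY b hb)⟩, hb⟩
  have liftsub : ∀ (x : {a : A // JoinIrr a}ᵒᵈ) (Y : Set A),
      Y ⊆ {b : A | IsAtom b ∧ b ≤ jval x} →
      {z : {a : A // JoinIrr a}ᵒᵈ | jval z ∈ Y} ⊆ maxSet (Set.Ici x) := by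
    intro x Y hsub z hz
    exact (mem_maxSet_Ici_iff' x z).2 ⟨(hsub hz).1, (hsub hz).2⟩
  -- atoms below the skeleton value
  have atomsOf : ∀ (x : {a : A // JoinIrr a}ᵒᵈ) (Y : Set A), (∀ b ∈ Y, IsAtom b) →
      {z : {a : A // JoinIrr a}ᵒᵈ | jval z ∈ Y} = maxSet (Set.Ici (s x {z | jval z ∈ Y})) →
      {p : A | IsAtom p ∧ p ≤ jval (s x {z | jval z ∈ Y})} = Y := by
    intro x Y hY h2
    ext p
    simp only [Set.mem_setOf_eq]
    constructor
    · rintro ⟨hp1, hp2⟩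
      have hmem : (OrderDual.toDual ⟨p, atom_joinIrr hp1⟩ : {a : A // JoinIrr a}ᵒᵈ) ∈
          maxSet (Set.Ici (s x {z | jval z ∈ Y})) :=
        (mem_maxSet_Ici_iff' _ _).2 ⟨hp1, hp2⟩
      rw [← h2] at hmem
      exact hmem
    · intro hp
      have hmem : (OrderDual.toDual ⟨p, atom_joinIrr (hY p hp)⟩ : {a : A // JoinIrr a}ᵒᵈ) ∈
          {z : {a : A // JoinIrr a}ᵒᵈ | jval z ∈ Y} := hp
      rw [h2] at hmem
      exact (mem_maxSet_Ici_iff' _ _).1 hmem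
  refine ⟨hne, ⟨fun a Y =>
      if h : JoinIrr a then jval (s (OrderDual.toDual ⟨a, h⟩) {z | jval z ∈ Y}) else ⊥,
      ?_, ?_⟩, ?_⟩
  · intro a Y ha hYne hYsub
    simp only [dif_pos ha]
    have hsub' := liftsub (OrderDual.toDual ⟨a, ha⟩) Y hYsub
    obtain ⟨h1, h2⟩ := hs1 (OrderDual.toDual ⟨a, ha⟩) _
      (liftne Y hYne (fun b hb => (hYsub hb).1)) hsub'
    exact ⟨(OrderDual.ofDual (s (OrderDual.toDual ⟨a, ha⟩) {z | jval z ∈ Y})).2,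
      (jle_iff' _ _).1 h1,
      atomsOf _ Y (fun b hb => (hYsub hb).1) h2⟩
  · intro a Y Z ha hYne hZne hYsub hZsub hYZ
    simp only [dif_pos ha]
    refine (jle_iff' _ _).1 (hs2 (OrderDual.toDual ⟨a, ha⟩) _ _
      (liftne Y hYne (fun b hb => (hYsub hb).1)) (liftne Z hZne (fun b hb => (hZsub hb).1))
      (liftsub _ Y hYsub) (liftsub _ Z hZsub) (fun z hz => hYZ hz))
  · intro b hbne
    set Y : Set A := {p : A | IsAtom p ∧ p ≤ b} with hYdef
    have hYatoms : ∀ p ∈ Y, IsAtom p := fun p hp => hp.1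
    have hYne : Y.Nonempty := by
      obtain ⟨p, hp, hple⟩ := exists_atom_le hbne
      exact ⟨p, hp, hple⟩
    have hYJne := liftne Y hYne hYatoms
    have hYJuniv : {z : {a : A // JoinIrr a}ᵒᵈ | jval z ∈ Y} ⊆
        maxSet (Set.univ : Set {a : A // JoinIrr a}ᵒᵈ) :=
      fun z hz => (mem_maxSet_univ_iff' z).2 hz.1
    have hYJIci : {z : {a : A // JoinIrr a}ᵒᵈ | jval z ∈ Y} ⊆ maxSet (Set.Ici bot) :=
      liftsub bot Y (fun p hp => ⟨hp.1, hbotval ▸ le_top⟩)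
    obtain ⟨h1, h2⟩ := hs1 bot _ hYJne hYJIci
    have hatoms := atomsOf bot Y hYatoms h2
    have hEq : neg (neg b) = jval (s bot {z | jval z ∈ Y}) := by
      refine le_antisymm ?_ ?_
      · refine le_of_forall_joinIrr_le _ _ (fun q hq hqle => ?_)
        have hq' : maxSet (Set.Ici (OrderDual.toDual ⟨q, hq⟩ : {a : A // JoinIrr a}ᵒᵈ)) ⊆
            {z : {a : A // JoinIrr a}ᵒᵈ | jval z ∈ Y} := by
          intro w hw
          obtain ⟨hw1, hw2⟩ := (mem_maxSet_Ici_iff' _ w).1 hw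
          exact ⟨hw1, (le_negneg_iff hneg).1 hqle (jval w) hw1 hw2⟩
        exact (jle_iff' _ _).1 (hs3 (OrderDual.toDual ⟨q, hq⟩) _ hYJne hYJuniv hq')
      · refine (le_negneg_iff hneg).2 (fun p hp hple => ?_)
        have : p ∈ Y := hatoms ▸ Set.mem_setOf_eq ▸ ⟨hp, hple⟩
        exact this.2
    exact hEq ▸ (OrderDual.ofDual (s bot {z | jval z ∈ Y})).2

end Main3

/-- Let `A` be a finite pseudocomplemented distributive lattice and let `J` be the order dual
of the subposet of join-irreducible elements of `A`. Then `J` has a free skeleton iff `A` is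
nontrivial and: (a) there is a family `c a Y` of join-irreducibles (for `a` join-irreducible
and `Y` a nonempty set of atoms below `a`) with `c a Y ≤ a`, whose set of atoms below it is
exactly `Y`, monotone in `Y`; and (b) `¬¬b` is join-irreducible for every `b ≠ ⊥`. -/
theorem joinIrr_dual_hasFreeSkeleton_iff
    {A : Type*} [DistribLattice A] [BoundedOrder A] [Fintype A]
    (neg : A → A) (hneg : ∀ a b : A, a ≤ neg b ↔ a ⊓ b = ⊥) :
    HasFreeSkeleton ({a : A // JoinIrr a}ᵒᵈ) ↔
      ((⊥ : A) ≠ ⊤ ∧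
        (∃ c : A → Set A → A,
          (∀ (a : A) (Y : Set A), JoinIrr a → Y.Nonempty →
              Y ⊆ {b : A | IsAtom b ∧ b ≤ a} →
              JoinIrr (c a Y) ∧ c a Y ≤ a ∧ {b : A | IsAtom b ∧ b ≤ c a Y} = Y) ∧
          (∀ (a : A) (Y Z : Set A), JoinIrr a → Y.Nonempty → Z.Nonempty →
              Y ⊆ {b : A | IsAtom b ∧ b ≤ a} → Z ⊆ {b : A | IsAtom b ∧ b ≤ a} →
              Y ⊆ Z → c a Y ≤ c a Z)) ∧
        (∀ b : A, b ≠ ⊥ → JoinIrr (neg (neg b)))) := by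
  constructor
  · rintro ⟨bot, s, hbot, hsk⟩
    exact forward hneg bot s hbot hsk
  · rintro ⟨hbt, ⟨c, hc1, hc2⟩, hb⟩
    exact backward hneg hbt c hc1 hc2 hb
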